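/- arXiv:2508.17112 — 4 statements merged into one kernel-verified Lean document; each statement's English description precedes it below -/
import Mathlib

section
/- Let p ∈ [0,1] with p ≠ 1/2 and q = 1 − p. Let X and Y be real random variables on a probability space such that X ~ Bernoulli(p), Y is independent of X, Y is square-integrable, and X + Y is symmetric about 0. Then Var(Y) ≥ p·q. -/
open MeasureTheory ProbabilityTheory

/-- Auxiliary anti-periodic odd "bump": `(-1)^⌊y⌋ * fract y * (1 - fract y)`. -/
noncomputable def bsvG (y : ℝ) : ℝ := (-1 : ℝ) ^ ⌊y⌋ * (Int.fract y * (1 - Int.fract y))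

lemma bsvG_measurable : Measurable bsvG := by
  apply Measurable.mul
  · exact measurable_from_top.comp Int.measurable_floor
  · exact measurable_fract.mul (measurable_const.sub measurable_fract)

lemma neg_one_zpow_abs (k : ℤ) : |(-1 : ℝ) ^ k| = 1 := by
  rcases Int.even_or_odd k with he | ho
  · rw [he.neg_one_zpow]; norm_num
  · rw [ho.neg_one_zpow]; norm_num

lemma bsvG_add_one (y : ℝ) : bsvG (y + 1) = - bsvG y := by
  unfold bsvG
  rw [Int.fract_add_one, Int.floor_add_one, zpow_add_one₀ (by norm_num : (-1:ℝ) ≠ 0)]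
  ring

lemma bsvG_neg (y : ℝ) : bsvG (-y) = - bsvG y := by
  rcases eq_or_ne (Int.fract y) 0 with h | h
  · have h' : Int.fract (-y) = 0 := Int.fract_neg_eq_zero.2 h
    unfold bsvG; rw [h, h']; ring
  · have hb : (⌊y⌋ : ℝ) + Int.fract y = y := Int.floor_add_fract y
    have hlt : Int.fract y < 1 := Int.fract_lt_one y
    have hpos : 0 < Int.fract y := lt_of_le_of_ne (Int.fract_nonneg y) (Ne.symm h)
    have h1 : Int.fract (-y) = 1 - Int.fract y := Int.fract_neg h
    have h2 : ⌊-y⌋ = -⌊y⌋ - 1 := by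
      rw [Int.floor_eq_iff]
      constructor
      · push_cast; linarith
      · push_cast; linarith
    have h3 : (-1 : ℝ) ^ (-⌊y⌋ - 1) = -(-1 : ℝ) ^ ⌊y⌋ := by
      rcases Int.even_or_odd ⌊y⌋ with he | ho
      · have : Odd (-⌊y⌋ - 1) := he.neg.sub_odd odd_one
        rw [this.neg_one_zpow, he.neg_one_zpow]
      · have : Even (-⌊y⌋ - 1) := ho.neg.sub_odd odd_one
        rw [this.neg_one_zpow, ho.neg_one_zpow]; norm_num
    unfold bsvG
    rw [h1, h2, h3]
    ring

lemma bsvG_abs_le (y : ℝ) : |bsvG y| ≤ 1 := by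
  unfold bsvG
  have h0 := Int.fract_nonneg y
  have h1 := (Int.fract_lt_one y).le
  rw [abs_mul, neg_one_zpow_abs, one_mul, abs_of_nonneg (by nlinarith)]
  nlinarith

lemma bsvG_le (y : ℝ) : bsvG y ≤ y * (y + 1) := by
  have h0 := Int.fract_nonneg y
  have h1 := Int.fract_lt_one y
  have hb : (⌊y⌋ : ℝ) + Int.fract y = y := Int.floor_add_fract y
  have habs : bsvG y ≤ Int.fract y * (1 - Int.fract y) := by
    unfold bsvG
    rcases Int.even_or_odd ⌊y⌋ with he | ho
    · rw [he.neg_one_zpow]; nlinarith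
    · rw [ho.neg_one_zpow]; nlinarith
  rcases le_or_gt 1 ⌊y⌋ with hk | hk
  · have hk' : (1 : ℝ) ≤ (⌊y⌋ : ℝ) := by exact_mod_cast hk
    nlinarith
  rcases le_or_gt ⌊y⌋ (-3) with hk2 | hk2
  · have hk' : ((⌊y⌋ : ℝ)) ≤ -3 := by exact_mod_cast hk2
    nlinarith
  · interval_cases h : ⌊y⌋
    · -- ⌊y⌋ = -2
      rw [show bsvG y = Int.fract y * (1 - Int.fract y) by
        unfold bsvG; rw [h]; norm_num]
      push_cast at hb
      nlinarith
    · -- ⌊y⌋ = -1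
      rw [show bsvG y = -(Int.fract y * (1 - Int.fract y)) by
        unfold bsvG; rw [h]; norm_num]
      push_cast at hb
      nlinarith
    · -- ⌊y⌋ = 0
      rw [show bsvG y = Int.fract y * (1 - Int.fract y) by
        unfold bsvG; rw [h]; norm_num]
      push_cast at hb
      nlinarith

theorem bernoulli_symmetrizer_variance_bound
    {Ω : Type*} [MeasurableSpace Ω] (μ : Measure Ω) [IsProbabilityMeasure μ]
    (X Y : Ω → ℝ) (hXm : Measurable X) (hYm : Measurable Y)
    (p : ℝ) (hp : p ∈ Set.Icc (0 : ℝ) 1) (hp' : p ≠ 1 / 2)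
    (hX1 : μ {ω | X ω = 1} = ENNReal.ofReal p)
    (hX0 : μ {ω | X ω = 0} = ENNReal.ofReal (1 - p))
    (hindep : IndepFun X Y μ)
    (hY2 : MemLp Y 2 μ)
    (hsymm : Measure.map (fun ω => X ω + Y ω) μ
      = Measure.map (fun ω => -(X ω + Y ω)) μ) :
    variance Y μ ≥ p * (1 - p) := by
  obtain ⟨hp0, hp1⟩ := hp
  have hc0 : (1 - 2*p) ≠ 0 := fun h => hp' (by linarith)
  set c : ℝ := (1 - 2*p)⁻¹ with hcdef
  set H : ℝ → ℝ := fun y => -y + c * bsvG y with hHdef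
  have HM : Measurable H := (measurable_id.neg).add (bsvG_measurable.const_mul c)
  have Hodd : ∀ y, H (-y) = - H y := by
    intro y; simp only [hHdef]; rw [bsvG_neg]; ring
  have Hkey : ∀ y : ℝ, (1-p) * H y + p * H (y+1) + p ≤ y^2 := by
    intro y
    have h1 := bsvG_le y
    have h2 : bsvG (y+1) = - bsvG y := bsvG_add_one y
    have h3 : (1-2*p) * c = 1 := mul_inv_cancel₀ hc0
    have : (1-p) * H y + p * H (y+1) + p = -y + ((1-2*p)*c) * bsvG y := by
      simp only [hHdef]; rw [h2]; ring
    rw [this, h3]; nlinarith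
  -- basic measure facts about X
  have hA : MeasurableSet {ω | X ω = 1} := hXm (measurableSet_singleton 1)
  have hB : MeasurableSet {ω | X ω = 0} := hXm (measurableSet_singleton 0)
  have hdisj : Disjoint {ω | X ω = 1} {ω | X ω = 0} := by
    rw [Set.disjoint_left]
    intro ω h1 h0
    simp only [Set.mem_setOf_eq] at h1 h0
    rw [h1] at h0; norm_num at h0
  have hunion : μ ({ω | X ω = 1} ∪ {ω | X ω = 0}) = 1 := by
    rw [measure_union hdisj hB, hX1, hX0,
      ← ENNReal.ofReal_add hp0 (by linarith)]
    norm_num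
  have hae : ∀ᵐ ω ∂μ, X ω = 1 ∨ X ω = 0 := by
    rw [ae_iff]
    have hset : {ω | ¬(X ω = 1 ∨ X ω = 0)} = ({ω | X ω = 1} ∪ {ω | X ω = 0})ᶜ := by
      ext ω; simp [not_or]
    rw [hset, measure_compl (hA.union hB) (measure_ne_top _ _), hunion, measure_univ]
    simp
  -- integrability
  have hYint : Integrable Y μ := hY2.integrable one_le_two
  have hY2int : Integrable (fun ω => Y ω ^ 2) μ := hY2.integrable_sq
  have hgYint : Integrable (fun ω => bsvG (Y ω)) μ := by
    refine Integrable.mono' (integrable_const (1:ℝ))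
      ((bsvG_measurable.comp hYm).aestronglyMeasurable) ?_
    filter_upwards with ω
    rw [Real.norm_eq_abs]; exact bsvG_abs_le _
  have hgY1int : Integrable (fun ω => bsvG (Y ω + 1)) μ := by
    refine Integrable.mono' (integrable_const (1:ℝ))
      ((bsvG_measurable.comp (hYm.add measurable_const)).aestronglyMeasurable) ?_
    filter_upwards with ω
    rw [Real.norm_eq_abs]; exact bsvG_abs_le _
  have hHYint : Integrable (fun ω => H (Y ω)) μ := by
    have := (hYint.neg).add (hgYint.const_mul c)
    exact this
  have hHY1int : Integrable (fun ω => H (Y ω + 1)) μ := by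
    have h1 : Integrable (fun ω => -(Y ω + 1) + c * bsvG (Y ω + 1)) μ :=
      ((hYint.add (integrable_const 1)).neg).add (hgY1int.const_mul c)
    exact h1
  -- X is a.e. an indicator
  have hXeq : X =ᵐ[μ] Set.indicator {ω | X ω = 1} (fun _ => (1:ℝ)) := by
    filter_upwards [hae] with ω hω
    rcases hω with h1 | h0
    · simp [Set.indicator_apply, h1]
    · simp [Set.indicator_apply, h0]
  have hXint : Integrable X μ :=
    (((integrable_const (1:ℝ)).indicator hA)).congr hXeq.symm
  have hEX : ∫ ω, X ω ∂μ = p := by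
    rw [integral_congr_ae hXeq, integral_indicator_const (1:ℝ) hA, measureReal_def, hX1,
      ENNReal.toReal_ofReal hp0, smul_eq_mul, mul_one]
  -- E[Z] = 0 by symmetry
  have hZm : Measurable (fun ω => X ω + Y ω) := hXm.add hYm
  have hZint : Integrable (fun ω => X ω + Y ω) μ := hXint.add hYint
  have hmapEq : ∫ ω, (X ω + Y ω) ∂μ = ∫ ω, -(X ω + Y ω) ∂μ := by
    calc ∫ ω, (X ω + Y ω) ∂μ
        = ∫ z, z ∂(Measure.map (fun ω => X ω + Y ω) μ) :=
          (integral_map hZm.aemeasurable aestronglyMeasurable_id).symm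
      _ = ∫ z, z ∂(Measure.map (fun ω => -(X ω + Y ω)) μ) := by rw [hsymm]
      _ = ∫ ω, -(X ω + Y ω) ∂μ :=
          integral_map hZm.neg.aemeasurable aestronglyMeasurable_id
  have hEZ : ∫ ω, (X ω + Y ω) ∂μ = 0 := by
    have h2 : ∫ ω, -(X ω + Y ω) ∂μ = - ∫ ω, (X ω + Y ω) ∂μ := integral_neg _
    linarith [hmapEq, h2]
  have hEY : ∫ ω, Y ω ∂μ = -p := by
    rw [integral_add hXint hYint, hEX] at hEZ
    linarith
  -- E[H(Z)] = 0 by symmetry and oddness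
  have hEHZ : ∫ ω, H (X ω + Y ω) ∂μ = 0 := by
    have e1 : ∫ ω, H (X ω + Y ω) ∂μ
        = ∫ z, H z ∂(Measure.map (fun ω => X ω + Y ω) μ) :=
      (integral_map hZm.aemeasurable HM.aestronglyMeasurable).symm
    have e2 : ∫ z, H z ∂(Measure.map (fun ω => -(X ω + Y ω)) μ)
        = ∫ ω, H (-(X ω + Y ω)) ∂μ :=
      integral_map hZm.neg.aemeasurable HM.aestronglyMeasurable
    have e3 : ∫ ω, H (-(X ω + Y ω)) ∂μ = - ∫ ω, H (X ω + Y ω) ∂μ := by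
      simp only [Hodd]; exact integral_neg _
    rw [hsymm, e2, e3] at e1
    linarith
  -- split E[H(Z)] via independence
  have hf1 : Measurable (fun x : ℝ => if x = 0 then (1:ℝ) else 0) :=
    measurable_const.ite (measurableSet_eq) measurable_const
  have hf2 : Measurable (fun x : ℝ => if x = 1 then (1:ℝ) else 0) :=
    measurable_const.ite (measurableSet_eq) measurable_const
  have hint1 : Integrable (fun ω => if X ω = 0 then (1:ℝ) else 0) μ := by
    refine Integrable.mono' (integrable_const (1:ℝ))
      ((hf1.comp hXm).aestronglyMeasurable) ?_
    filter_upwards with ω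
    rw [Real.norm_eq_abs]
    split <;> norm_num
  have hint2 : Integrable (fun ω => if X ω = 1 then (1:ℝ) else 0) μ := by
    refine Integrable.mono' (integrable_const (1:ℝ))
      ((hf2.comp hXm).aestronglyMeasurable) ?_
    filter_upwards with ω
    rw [Real.norm_eq_abs]
    split <;> norm_num
  have hEf1 : ∫ ω, (if X ω = 0 then (1:ℝ) else 0) ∂μ = 1 - p := by
    have : (fun ω => if X ω = 0 then (1:ℝ) else 0)
        = Set.indicator {ω | X ω = 0} (fun _ => (1:ℝ)) := by
      ext ω; rw [Set.indicator_apply]; simp [Set.mem_setOf_eq]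
    rw [this, integral_indicator_const (1:ℝ) hB, measureReal_def, hX0,
      ENNReal.toReal_ofReal (by linarith), smul_eq_mul, mul_one]
  have hEf2 : ∫ ω, (if X ω = 1 then (1:ℝ) else 0) ∂μ = p := by
    have : (fun ω => if X ω = 1 then (1:ℝ) else 0)
        = Set.indicator {ω | X ω = 1} (fun _ => (1:ℝ)) := by
      ext ω; rw [Set.indicator_apply]; simp [Set.mem_setOf_eq]
    rw [this, integral_indicator_const (1:ℝ) hA, measureReal_def, hX1,
      ENNReal.toReal_ofReal hp0, smul_eq_mul, mul_one]
  have hm1 : ∫ ω, (if X ω = 0 then (1:ℝ) else 0) * H (Y ω) ∂μ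
      = (1 - p) * ∫ ω, H (Y ω) ∂μ := by
    have hi : IndepFun (fun ω => if X ω = 0 then (1:ℝ) else 0)
        (fun ω => H (Y ω)) μ := hindep.comp hf1 HM
    have h2 : ∫ ω, (if X ω = 0 then (1:ℝ) else 0) * H (Y ω) ∂μ
        = (∫ ω, (if X ω = 0 then (1:ℝ) else 0) ∂μ) * ∫ ω, H (Y ω) ∂μ :=
      hi.integral_mul_eq_mul_integral hint1.aestronglyMeasurable hHYint.aestronglyMeasurable
    rw [h2, hEf1]
  have hm2 : ∫ ω, (if X ω = 1 then (1:ℝ) else 0) * H (Y ω + 1) ∂μ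
      = p * ∫ ω, H (Y ω + 1) ∂μ := by
    have hi : IndepFun (fun ω => if X ω = 1 then (1:ℝ) else 0)
        (fun ω => H (Y ω + 1)) μ :=
      hindep.comp hf2 (HM.comp (measurable_id.add_const 1))
    have h2 : ∫ ω, (if X ω = 1 then (1:ℝ) else 0) * H (Y ω + 1) ∂μ
        = (∫ ω, (if X ω = 1 then (1:ℝ) else 0) ∂μ) * ∫ ω, H (Y ω + 1) ∂μ :=
      hi.integral_mul_eq_mul_integral hint2.aestronglyMeasurable hHY1int.aestronglyMeasurable
    rw [h2, hEf2]
  have hprod1int : Integrable (fun ω => (if X ω = 0 then (1:ℝ) else 0) * H (Y ω)) μ := by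
    refine Integrable.mono' hHYint.abs
      (((hf1.comp hXm).mul (HM.comp hYm)).aestronglyMeasurable) ?_
    filter_upwards with ω
    rw [Real.norm_eq_abs, abs_mul]
    split <;> simp [abs_nonneg]
  have hprod2int : Integrable (fun ω => (if X ω = 1 then (1:ℝ) else 0) * H (Y ω + 1)) μ := by
    refine Integrable.mono' hHY1int.abs
      (((hf2.comp hXm).mul (HM.comp (hYm.add_const 1))).aestronglyMeasurable) ?_
    filter_upwards with ω
    rw [Real.norm_eq_abs, abs_mul]
    split <;> simp [abs_nonneg]
  have hsplit : ∫ ω, H (X ω + Y ω) ∂μ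
      = (1-p) * ∫ ω, H (Y ω) ∂μ + p * ∫ ω, H (Y ω + 1) ∂μ := by
    have hae2 : (fun ω => H (X ω + Y ω)) =ᵐ[μ]
        fun ω => (if X ω = 0 then (1:ℝ) else 0) * H (Y ω)
          + (if X ω = 1 then (1:ℝ) else 0) * H (Y ω + 1) := by
      filter_upwards [hae] with ω hω
      rcases hω with h1 | h0
      · rw [h1]; norm_num; rw [add_comm]
      · rw [h0]; norm_num
    rw [integral_congr_ae hae2, integral_add hprod1int hprod2int, hm1, hm2]
  -- conclude E[Y^2] ≥ p
  have hRHSint : Integrable (fun ω => p + ((1-p) * H (Y ω) + p * H (Y ω + 1))) μ :=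
    (integrable_const p).add ((hHYint.const_mul _).add (hHY1int.const_mul _))
  have hmono : ∫ ω, (p + ((1-p) * H (Y ω) + p * H (Y ω + 1))) ∂μ ≤ ∫ ω, Y ω ^ 2 ∂μ := by
    refine integral_mono hRHSint hY2int ?_
    intro ω
    have := Hkey (Y ω)
    simp only
    linarith
  have hLHS : ∫ ω, (p + ((1-p) * H (Y ω) + p * H (Y ω + 1))) ∂μ = p := by
    have i2 : Integrable (fun ω => (1-p) * H (Y ω)) μ := hHYint.const_mul _
    have i3 : Integrable (fun ω => p * H (Y ω + 1)) μ := hHY1int.const_mul _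
    have i23 : Integrable (fun ω => (1-p) * H (Y ω) + p * H (Y ω + 1)) μ := i2.add i3
    rw [integral_add (integrable_const p) i23, integral_add i2 i3,
      integral_const_mul, integral_const_mul, integral_const]
    have : (1-p) * ∫ ω, H (Y ω) ∂μ + p * ∫ ω, H (Y ω + 1) ∂μ = 0 := by
      rw [← hsplit]; exact hEHZ
    simp [measure_univ] at this ⊢
    linarith
  have hEY2 : p ≤ ∫ ω, Y ω ^ 2 ∂μ := by rw [← hLHS]; exact hmono
  rw [ge_iff_le, variance_eq_sub hY2]
  have : μ[Y ^ 2] = ∫ ω, Y ω ^ 2 ∂μ := by rfl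
  rw [this, hEY]
  nlinarith
end

section
/- Let p ∈ [0,1] with p ≠ 1/2. Let X and Y be real random variables on a probability space such that X ~ Bernoulli(p), Y is independent of X, Y is square-integrable, and X + Y is symmetric about 0. Then E[Y²] ≥ p. -/
open MeasureTheory ProbabilityTheory Real

/-- On `[0, π/2]` we have `x - x^2/π ≤ sin x`. -/
lemma sin_lower_half {x : ℝ} (h0 : 0 ≤ x) (h2 : x ≤ π / 2) :
    x - x ^ 2 / π ≤ Real.sin x := by
  have hpi1 : (3.141592 : ℝ) ≤ π := Real.pi_gt_d6.le
  have hpi2 : π ≤ 3.141593 := Real.pi_lt_d6.le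
  have hpipos : (0:ℝ) < π := by linarith
  rcases le_or_gt x 1 with hx1 | hx1
  · rcases eq_or_lt_of_le h0 with h | h
    · simp [← h]
    · have h3 : x - x ^ 3 / 4 < Real.sin x := by
        have := Real.sin_gt_sub_cube h; nlinarith [pow_pos h 3]
      have hx3 : x ^ 3 ≤ x ^ 2 := by nlinarith
      have : x - x ^ 2 / π ≤ x - x ^ 3 / 4 := by
        rw [sub_le_sub_iff_left, div_le_div_iff₀ (by norm_num) hpipos]
        nlinarith
      linarith
  · rcases le_or_gt x (π - 2) with hx2 | hx2
    · -- 1 ≤ x ≤ π - 2 : use sin x ≥ sin 1 > 3/4 ≥ x - x^2/π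
      have hs1 : Real.sin 1 > 3/4 := by
        have := Real.sin_gt_sub_cube (by norm_num : (0:ℝ) < 1)
        norm_num at this
        linarith
      have hmono : Real.sin 1 ≤ Real.sin x := by
        apply Real.sin_le_sin_of_le_of_le_pi_div_two (by linarith) h2 hx1.le
      have hd : x ^ 2 / π * π = x ^ 2 := div_mul_cancel₀ _ hpipos.ne'
      have hub' : (x - x ^ 2 / π) * π ≤ 3/4 * π := by
        nlinarith [mul_nonneg (sub_nonneg.2 hx2) (by linarith : (0:ℝ) ≤ 2 - x)]
      have hub : x - x ^ 2 / π ≤ 3/4 := le_of_mul_le_mul_right hub' hpipos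
      linarith
    · -- π - 2 ≤ x ≤ π/2 : Jordan's inequality
      have hj := Real.mul_le_sin h0 h2
      have h5 : x * π ≤ 2 * x + x ^ 2 := by nlinarith
      have : x ≤ 2 / π * x + x ^ 2 / π := by
        rw [div_mul_eq_mul_div, ← add_div, le_div_iff₀ hpipos]
        linarith
      linarith

/-- On `[0, π]` we have `x - x^2/π ≤ sin x`. -/
lemma sin_lower {x : ℝ} (h0 : 0 ≤ x) (h2 : x ≤ π) :
    x - x ^ 2 / π ≤ Real.sin x := by
  have hpipos : (0:ℝ) < π := Real.pi_pos
  rcases le_or_gt x (π / 2) with hx | hx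
  · exact sin_lower_half h0 hx
  · have h := sin_lower_half (x := π - x) (by linarith) (by linarith)
    rw [Real.sin_pi_sub] at h
    have : π - x - (π - x) ^ 2 / π = x - x ^ 2 / π := by
      field_simp; ring
    linarith [this ▸ h]

/-- The key pointwise inequality: `sin (π y) ≤ π (y² + y)` for all real `y`. -/
lemma key_pointwise (y : ℝ) : Real.sin (π * y) ≤ π * (y ^ 2 + y) := by
  have hpi1 : (3.141592 : ℝ) ≤ π := Real.pi_gt_d6.le
  have hpipos : (0:ℝ) < π := by linarith
  -- reduce to y ≥ -1/2 by the symmetry y ↦ -1-y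
  suffices H : ∀ z : ℝ, -1/2 ≤ z → Real.sin (π * z) ≤ π * (z ^ 2 + z) by
    rcases le_or_gt (-1/2) y with hy | hy
    · exact H y hy
    · have h := H (-1 - y) (by linarith)
      have h1 : Real.sin (π * (-1 - y)) = Real.sin (π * y) := by
        have : π * (-1 - y) = -(π + π * y) := by ring
        rw [this, Real.sin_neg, Real.sin_add]
        simp [Real.sin_pi, Real.cos_pi]
      have h2 : π * ((-1 - y) ^ 2 + (-1 - y)) = π * (y ^ 2 + y) := by ring
      rw [h1, h2] at h
      exact h
  intro z hz
  rcases le_or_gt z 0 with hz0 | hz0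
  · -- -1/2 ≤ z ≤ 0 : use sin_lower_half for x = -π z ∈ [0, π/2]
    have h := sin_lower_half (x := -(π * z)) (by nlinarith) (by nlinarith)
    have h1 : Real.sin (-(π * z)) = -Real.sin (π * z) := Real.sin_neg _
    rw [h1] at h
    have h2 : (-(π * z)) ^ 2 / π = π * z ^ 2 := by
      field_simp
    nlinarith [h]
  · rcases le_or_gt z 1 with hz1 | hz1
    · have h := Real.sin_le (by positivity : 0 ≤ π * z)
      nlinarith
    · have h := Real.sin_le_one (π * z)
      nlinarith

theorem bernoulli_symmetrizer_second_moment_bound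
    {Ω : Type*} [MeasurableSpace Ω] (μ : Measure Ω) [IsProbabilityMeasure μ]
    (X Y : Ω → ℝ) (hXm : Measurable X) (hYm : Measurable Y)
    (p : ℝ) (hp : p ∈ Set.Icc (0 : ℝ) 1) (hp' : p ≠ 1 / 2)
    (hX1 : μ {ω | X ω = 1} = ENNReal.ofReal p)
    (hX0 : μ {ω | X ω = 0} = ENNReal.ofReal (1 - p))
    (hindep : IndepFun X Y μ)
    (hY2 : MemLp Y 2 μ)
    (hsymm : Measure.map (fun ω => X ω + Y ω) μ
      = Measure.map (fun ω => -(X ω + Y ω)) μ) :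
    ∫ ω, (Y ω) ^ 2 ∂μ ≥ p := by
  have hp0 : 0 ≤ p := hp.1
  have hp1 : p ≤ 1 := hp.2
  set A : Set Ω := {ω | X ω = 1} with hA_def
  set B : Set Ω := {ω | X ω = 0} with hB_def
  have hA : MeasurableSet A := hXm (measurableSet_singleton 1)
  have hB : MeasurableSet B := hXm (measurableSet_singleton 0)
  have hdisj : Disjoint A B := by
    rw [Set.disjoint_left]
    intro ω h1 h0
    simp only [hA_def, hB_def, Set.mem_setOf_eq] at h1 h0
    rw [h1] at h0; norm_num at h0
  have hunion : μ (A ∪ B) = 1 := by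
    rw [measure_union hdisj hB, hX1, hX0, ← ENNReal.ofReal_add hp0 (by linarith)]
    norm_num
  have hae01 : ∀ᵐ ω ∂μ, ω ∈ A ∪ B := by
    have : μ (A ∪ B)ᶜ = 0 := by
      rw [measure_compl (hA.union hB) (measure_ne_top μ _), hunion, measure_univ, tsub_self]
    exact (MeasureTheory.ae_iff.2 this)
  -- X is a.e. equal to the indicator of A
  have hXae : X =ᵐ[μ] A.indicator (fun _ => (1:ℝ)) := by
    filter_upwards [hae01] with ω hω
    rcases hω with h1 | h0
    · simp only [hA_def, Set.mem_setOf_eq] at h1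
      rw [Set.indicator_of_mem (by exact h1) , h1]
    · simp only [hB_def, Set.mem_setOf_eq] at h0
      have : ω ∉ A := by
        simp only [hA_def, Set.mem_setOf_eq]
        rw [h0]; norm_num
      rw [Set.indicator_of_notMem this, h0]
  have hXint : Integrable X μ :=
    ((integrable_const (1:ℝ)).indicator hA).congr hXae.symm
  have hEX : ∫ ω, X ω ∂μ = p := by
    rw [integral_congr_ae hXae, integral_indicator_const _ hA, measureReal_def, hX1]
    simp [ENNReal.toReal_ofReal hp0]
  have hYint : Integrable Y μ := hY2.integrable (by norm_num)
  have hY2int : Integrable (fun ω => (Y ω) ^ 2) μ := hY2.integrable_sq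
  set Z : Ω → ℝ := fun ω => X ω + Y ω with hZ_def
  have hZm : Measurable Z := hXm.add hYm
  have hZint : Integrable Z μ := hXint.add hYint
  -- E[Z] = 0
  have hEZ : ∫ ω, Z ω ∂μ = 0 := by
    have h1 : ∫ z, z ∂(μ.map Z) = ∫ ω, Z ω ∂μ :=
      integral_map hZm.aemeasurable aestronglyMeasurable_id
    have h2 : ∫ z, z ∂(μ.map (fun ω => -(Z ω))) = ∫ ω, -(Z ω) ∂μ :=
      integral_map hZm.neg.aemeasurable aestronglyMeasurable_id
    have h3 : ∫ ω, -(Z ω) ∂μ = -∫ ω, Z ω ∂μ := integral_neg _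
    have := h1.symm.trans ((congrArg (fun m => ∫ z, z ∂m) hsymm).trans (h2.trans h3))
    linarith
  have hEY : ∫ ω, Y ω ∂μ = -p := by
    have := integral_add hXint hYint
    simp only [hZ_def] at hEZ
    rw [hEX] at this
    have h : ∫ ω, (X ω + Y ω) ∂μ = 0 := hEZ
    rw [h] at this
    linarith
  -- E[sin (π Z)] = 0
  have hsinmeas : Measurable fun t : ℝ => Real.sin (π * t) :=
    Real.measurable_sin.comp (measurable_const_mul π)
  have hcosmeas : Measurable fun t : ℝ => Real.cos (π * t) :=
    Real.measurable_cos.comp (measurable_const_mul π)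
  have hbdd : ∀ (f : Ω → ℝ), AEStronglyMeasurable f μ → (∀ ω, |f ω| ≤ 1) → Integrable f μ :=
    fun f hf h => Integrable.mono' (integrable_const 1) hf (ae_of_all _ fun ω => by
      simpa using h ω)
  have hsinZint : Integrable (fun ω => Real.sin (π * Z ω)) μ :=
    hbdd _ (hsinmeas.comp hZm).aestronglyMeasurable fun ω => Real.abs_sin_le_one _
  have hEsinZ : ∫ ω, Real.sin (π * Z ω) ∂μ = 0 := by
    have hc : Continuous fun t : ℝ => Real.sin (π * t) :=
      Real.continuous_sin.comp (continuous_const.mul continuous_id)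
    have h1 : ∫ z, Real.sin (π * z) ∂(μ.map Z) = ∫ ω, Real.sin (π * Z ω) ∂μ :=
      integral_map hZm.aemeasurable hc.aestronglyMeasurable
    have h2 : ∫ z, Real.sin (π * z) ∂(μ.map (fun ω => -(Z ω)))
        = ∫ ω, Real.sin (π * (-(Z ω))) ∂μ :=
      integral_map hZm.neg.aemeasurable hc.aestronglyMeasurable
    have h3 : ∫ ω, Real.sin (π * (-(Z ω))) ∂μ = -∫ ω, Real.sin (π * Z ω) ∂μ := by
      rw [← integral_neg]
      congr 1; funext ω
      rw [mul_neg, Real.sin_neg]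
    have := h1.symm.trans ((congrArg (fun m => ∫ z, Real.sin (π * z) ∂m) hsymm).trans
      (h2.trans h3))
    linarith
  -- expand sin(πZ) with the addition formula
  have hexpand : (fun ω => Real.sin (π * Z ω))
      = fun ω => Real.sin (π * X ω) * Real.cos (π * Y ω)
        + Real.cos (π * X ω) * Real.sin (π * Y ω) := by
    funext ω
    rw [hZ_def]
    simp only [mul_add]
    exact Real.sin_add _ _
  have hsinXcosY_int : Integrable (fun ω => Real.sin (π * X ω) * Real.cos (π * Y ω)) μ :=
    hbdd _ (((hsinmeas.comp hXm).mul (hcosmeas.comp hYm)).aestronglyMeasurable) fun ω => by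
      rw [abs_mul]
      exact mul_le_one₀ (Real.abs_sin_le_one _) (abs_nonneg _) (Real.abs_cos_le_one _)
  have hcosXsinY_int : Integrable (fun ω => Real.cos (π * X ω) * Real.sin (π * Y ω)) μ :=
    hbdd _ (((hcosmeas.comp hXm).mul (hsinmeas.comp hYm)).aestronglyMeasurable) fun ω => by
      rw [abs_mul]
      exact mul_le_one₀ (Real.abs_cos_le_one _) (abs_nonneg _) (Real.abs_sin_le_one _)
  -- first term vanishes since sin(πX) = 0 a.e.
  have hterm1 : ∫ ω, Real.sin (π * X ω) * Real.cos (π * Y ω) ∂μ = 0 := by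
    have : (fun ω => Real.sin (π * X ω) * Real.cos (π * Y ω)) =ᵐ[μ] 0 := by
      filter_upwards [hae01] with ω hω
      rcases hω with h1 | h0
      · simp only [hA_def, Set.mem_setOf_eq] at h1
        simp [h1, Real.sin_pi]
      · simp only [hB_def, Set.mem_setOf_eq] at h0
        simp [h0]
    rw [integral_congr_ae this]
    simp
  -- second term factors by independence
  have hindep2 : IndepFun (fun ω => Real.cos (π * X ω)) (fun ω => Real.sin (π * Y ω)) μ :=
    hindep.comp hcosmeas hsinmeas
  have hterm2 : ∫ ω, Real.cos (π * X ω) * Real.sin (π * Y ω) ∂μ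
      = (∫ ω, Real.cos (π * X ω) ∂μ) * ∫ ω, Real.sin (π * Y ω) ∂μ :=
    hindep2.integral_mul_eq_mul_integral (hcosmeas.comp hXm).aestronglyMeasurable
      (hsinmeas.comp hYm).aestronglyMeasurable
  -- E[cos(πX)] = 1 - 2p
  have hEcosX : ∫ ω, Real.cos (π * X ω) ∂μ = 1 - 2 * p := by
    have hae : (fun ω => Real.cos (π * X ω))
        =ᵐ[μ] fun ω => 1 - 2 * A.indicator (fun _ => (1:ℝ)) ω := by
      filter_upwards [hae01] with ω hω
      rcases hω with h1 | h0
      · simp only [hA_def, Set.mem_setOf_eq] at h1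
        rw [Set.indicator_of_mem (by exact h1)]
        simp [h1, Real.cos_pi]
        norm_num
      · simp only [hB_def, Set.mem_setOf_eq] at h0
        have hnA : ω ∉ A := by
          simp only [hA_def, Set.mem_setOf_eq]; rw [h0]; norm_num
        rw [Set.indicator_of_notMem hnA]
        simp [h0]
    rw [integral_congr_ae hae, integral_sub (integrable_const 1)
      (((integrable_const (1:ℝ)).indicator hA).const_mul 2),
      integral_const, integral_const_mul, integral_indicator_const _ hA, measureReal_def, measureReal_def, hX1]
    simp [ENNReal.toReal_ofReal hp0]
  -- conclude E[sin(πY)] = 0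
  have hsinYint : Integrable (fun ω => Real.sin (π * Y ω)) μ :=
    hbdd _ (hsinmeas.comp hYm).aestronglyMeasurable fun ω => Real.abs_sin_le_one _
  have hEsinY : ∫ ω, Real.sin (π * Y ω) ∂μ = 0 := by
    have h := hEsinZ
    rw [hexpand, integral_add hsinXcosY_int hcosXsinY_int, hterm1, hterm2, hEcosX] at h
    have h2p : 1 - 2 * p ≠ 0 := fun hc => hp' (by linarith)
    have hmul : (1 - 2 * p) * ∫ ω, Real.sin (π * Y ω) ∂μ = 0 := by linarith
    exact (mul_eq_zero.mp hmul).resolve_left h2p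
  -- final combination via the pointwise inequality
  have hptw : ∀ ω, 0 ≤ π * ((Y ω) ^ 2 + Y ω) - Real.sin (π * Y ω) := fun ω =>
    sub_nonneg.2 (key_pointwise (Y ω))
  have hintsum : Integrable (fun ω => (Y ω) ^ 2 + Y ω) μ := hY2int.add hYint
  have hintA : Integrable (fun ω => π * ((Y ω) ^ 2 + Y ω)) μ := hintsum.const_mul π
  have h0 : 0 ≤ ∫ ω, (π * ((Y ω) ^ 2 + Y ω) - Real.sin (π * Y ω)) ∂μ :=
    integral_nonneg hptw
  rw [integral_sub hintA hsinYint, hEsinY, integral_const_mul,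
    integral_add hY2int hYint, hEY] at h0
  have hpipos : (0:ℝ) < π := Real.pi_pos
  have : 0 ≤ π * (∫ ω, (Y ω) ^ 2 ∂μ - p) := by simpa [sub_eq_add_neg] using h0
  nlinarith [this]
end

section
/- Let p ∈ ℝ with p ≠ 1/2 and set q = 1 − p. Define ψ : ℝ → ℝ by ψ(t) = h(t)/(q − p) − t, where h is the sawtooth function. Then ψ is odd (ψ(−t) = −ψ(t) for all t ∈ ℝ) and for every t ∈ ℝ one has q·ψ(t) + p·ψ(1 + t) ≤ t² − p. -/
open MeasureTheory

/-- The sawtooth function `h(t) = (-1)^(round t) * (t - round t)`, where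
`round t = ⌊t + 1/2⌋` is the nearest-integer function. -/
noncomputable def sawtooth (t : ℝ) : ℝ := (-1 : ℝ) ^ (round t) * (t - round t)

lemma neg_one_zpow_neg' (n : ℤ) : (-1 : ℝ) ^ (-n) = (-1 : ℝ) ^ n := by
  rcases Int.even_or_odd n with h | h
  · rw [h.neg_one_zpow, (h.neg).neg_one_zpow]
  · rw [h.neg_one_zpow, (h.neg).neg_one_zpow]

lemma sawtooth_neg (t : ℝ) : sawtooth (-t) = - sawtooth t := by
  obtain ⟨n, hn⟩ : ∃ n : ℤ, round t = n := ⟨round t, rfl⟩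
  have h1 : (n : ℝ) ≤ t + 1 / 2 := by rw [← hn]; exact_mod_cast round_le_add_half t
  have h2 : t - 1 / 2 < (n : ℝ) := by rw [← hn]; exact_mod_cast sub_half_lt_round t
  by_cases hb : t = (n : ℝ) - 1 / 2
  · have hr : round (-t) = 1 - n := by
      have e : -t = (2⁻¹ : ℝ) - (n : ℤ) := by rw [hb]; push_cast; ring
      rw [e, round_sub_intCast, round_two_inv]
    have e2 : (1 : ℤ) - n = -n + 1 := by ring
    rw [sawtooth, sawtooth, hr, hn, hb, e2, zpow_add₀ (by norm_num : (-1:ℝ) ≠ 0),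
      neg_one_zpow_neg']
    push_cast
    ring
  · have h1' : (n : ℝ) - 1 / 2 < t := by
      rcases lt_or_eq_of_le h1 with h | h
      · linarith
      · exact absurd (by linarith) hb
    have hr : round (-t) = -n := by
      have h0 : round (-t + (n : ℤ)) = 0 := by
        rw [round_eq_zero_iff, Set.mem_Ico]
        refine ⟨by linarith, by linarith⟩
      have := round_add_intCast (-t) n
      omega
    rw [sawtooth, sawtooth, hr, hn, neg_one_zpow_neg']
    push_cast
    ring

lemma sawtooth_add_one (t : ℝ) : sawtooth (1 + t) = - sawtooth t := by
  have hr : round (1 + t) = 1 + round t := by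
    rw [add_comm, round_add_one, add_comm]
  rw [sawtooth, sawtooth, hr, add_comm, zpow_add₀ (by norm_num : (-1:ℝ) ≠ 0)]
  push_cast
  ring

lemma sawtooth_le (t : ℝ) : sawtooth t ≤ t ^ 2 + t := by
  have h1 : (round t : ℝ) ≤ t + 1 / 2 := by exact_mod_cast round_le_add_half t
  have h2 : t - 1 / 2 < round t := sub_half_lt_round t
  rcases Int.even_or_odd (round t) with h | h
  · rw [sawtooth, h.neg_one_zpow, one_mul]
    rcases le_or_gt 0 (round t) with hn | hn
    · have : (0:ℝ) ≤ round t := by exact_mod_cast hn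
      nlinarith
    · obtain ⟨k, hk⟩ := h
      have : (round t : ℝ) ≤ -2 := by exact_mod_cast (by omega : round t ≤ -2)
      nlinarith [sq_nonneg ((round t : ℝ) + 1)]
  · rw [sawtooth, h.neg_one_zpow, neg_one_mul]
    rcases le_or_gt 1 (round t) with hn | hn
    · have : (1:ℝ) ≤ round t := by exact_mod_cast hn
      nlinarith
    · obtain ⟨k, hk⟩ := h
      have : (round t : ℝ) ≤ -1 := by exact_mod_cast (by omega : round t ≤ -1)
      nlinarith [sq_nonneg (t + 1)]

theorem dual_test_function_properties
    (p : ℝ) (hp : p ≠ 1 / 2) (q : ℝ) (hq : q = 1 - p)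
    (ψ : ℝ → ℝ) (hψ : ∀ t : ℝ, ψ t = sawtooth t / (q - p) - t) :
    (∀ t : ℝ, ψ (-t) = -ψ t) ∧
    (∀ t : ℝ, q * ψ t + p * ψ (1 + t) ≤ t ^ 2 - p) := by
  have hqp : q - p ≠ 0 := by
    rw [hq]; intro h; apply hp; linarith
  constructor
  · intro t
    rw [hψ, hψ, sawtooth_neg]
    ring
  · intro t
    have key : q * ψ t + p * ψ (1 + t) = sawtooth t - t - p := by
      rw [hψ, hψ, sawtooth_add_one]
      field_simp
      rw [hq]; ring
    rw [key]
    have := sawtooth_le t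
    linarith
end

section
/- Let p ∈ [0,1] and q = 1 − p. Let ψ : ℝ → ℝ be an odd measurable function satisfying q·ψ(t) + p·ψ(1 + t) ≤ t² − p for all t ∈ ℝ. Let X and Y be independent real random variables on a probability space with X ~ Bernoulli(p), Y square-integrable, X + Y symmetric about 0, and ψ(X + Y) integrable. Then E[Y²] ≥ p. -/
open MeasureTheory ProbabilityTheory

theorem second_moment_bound_of_dual_test_function
    {Ω : Type*} [MeasurableSpace Ω] (μ : Measure Ω) [IsProbabilityMeasure μ]
    (p : ℝ) (hp : p ∈ Set.Icc (0 : ℝ) 1)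
    (ψ : ℝ → ℝ) (hψm : Measurable ψ)
    (hodd : ∀ t : ℝ, ψ (-t) = -ψ t)
    (hψle : ∀ t : ℝ, (1 - p) * ψ t + p * ψ (1 + t) ≤ t ^ 2 - p)
    (X Y : Ω → ℝ) (hXm : Measurable X) (hYm : Measurable Y)
    (hX1 : μ {ω | X ω = 1} = ENNReal.ofReal p)
    (hX0 : μ {ω | X ω = 0} = ENNReal.ofReal (1 - p))
    (hindep : IndepFun X Y μ)
    (hY2 : MemLp Y 2 μ)
    (hsymm : Measure.map (fun ω => X ω + Y ω) μ
      = Measure.map (fun ω => -(X ω + Y ω)) μ)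
    (hint : Integrable (fun ω => ψ (X ω + Y ω)) μ) :
    ∫ ω, (Y ω) ^ 2 ∂μ ≥ p := by
  obtain ⟨hp0, hp1⟩ := hp
  have hfm : Measurable (fun ω => X ω + Y ω) := hXm.add hYm
  -- Step 1: E[ψ(X+Y)] = 0
  have hE0 : ∫ ω, ψ (X ω + Y ω) ∂μ = 0 := by
    have h1 : ∫ ω, ψ (X ω + Y ω) ∂μ
        = ∫ z, ψ z ∂(Measure.map (fun ω => X ω + Y ω) μ) :=
      (integral_map hfm.aemeasurable hψm.aestronglyMeasurable).symm
    have h2 : ∫ z, ψ z ∂(Measure.map (fun ω => -(X ω + Y ω)) μ)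
        = ∫ ω, ψ (-(X ω + Y ω)) ∂μ :=
      integral_map hfm.neg.aemeasurable hψm.aestronglyMeasurable
    have h3 : ∫ ω, ψ (-(X ω + Y ω)) ∂μ = -∫ ω, ψ (X ω + Y ω) ∂μ := by
      simp only [hodd]; exact integral_neg _
    rw [h1, hsymm, h2, h3] at *
    linarith [h1]
  -- Step 2: X is a.e. {0,1}-valued
  have hs1 : MeasurableSet {ω | X ω = 1} := hXm (measurableSet_singleton 1)
  have hs0 : MeasurableSet {ω | X ω = 0} := hXm (measurableSet_singleton 0)
  have hdisj : Disjoint {ω | X ω = 0} {ω | X ω = 1} := by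
    rw [Set.disjoint_left]
    intro ω h0 h1
    simp only [Set.mem_setOf_eq] at h0 h1
    rw [h0] at h1; norm_num at h1
  have hu : μ ({ω | X ω = 0} ∪ {ω | X ω = 1}) = 1 := by
    rw [measure_union hdisj hs1, hX0, hX1,
      ← ENNReal.ofReal_add (by linarith) hp0]
    norm_num
  have hae : ∀ᵐ ω ∂μ, X ω = 0 ∨ X ω = 1 := by
    rw [ae_iff]
    have : {ω | ¬(X ω = 0 ∨ X ω = 1)} = ({ω | X ω = 0} ∪ {ω | X ω = 1})ᶜ := by
      ext ω; simp [not_or]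
    rw [this, measure_compl (hs0.union hs1) (measure_ne_top _ _), hu]
    simp
  -- Step 3: key computation ∫ ψ(X ω + y) dμ
  have key : ∀ y : ℝ, ∫ ω, ψ (X ω + y) ∂μ = (1 - p) * ψ y + p * ψ (1 + y) := by
    intro y
    have hcongr : (fun ω => ψ (X ω + y)) =ᵐ[μ]
        fun ω => Set.indicator {ω | X ω = 1} (fun _ => ψ (1 + y) - ψ y) ω + ψ y := by
      filter_upwards [hae] with ω h
      rcases h with h | h
      · have hne : ω ∉ {ω | X ω = 1} := by simp [h]
        simp [Set.indicator_of_notMem hne, h]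
      · have hmem : ω ∈ {ω | X ω = 1} := h
        simp only [Set.indicator_of_mem hmem, h]
        ring_nf
    rw [integral_congr_ae hcongr,
      integral_add ((integrable_const _).indicator hs1) (integrable_const _),
      integral_indicator_const _ hs1, integral_const, measureReal_def, hX1]
    simp [ENNReal.toReal_ofReal hp0]
    ring
  -- Step 4: product measure
  set ν := Measure.map X μ with hν
  set ρ := Measure.map Y μ with hρ
  have hinstν : IsProbabilityMeasure ν := Measure.isProbabilityMeasure_map hXm.aemeasurable
  have hinstρ : IsProbabilityMeasure ρ := Measure.isProbabilityMeasure_map hYm.aemeasurable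
  have hprod : Measure.map (fun ω => (X ω, Y ω)) μ = ν.prod ρ :=
    (indepFun_iff_map_prod_eq_prod_map_map hXm.aemeasurable hYm.aemeasurable).mp hindep
  have hFm : Measurable (fun z : ℝ × ℝ => ψ (z.1 + z.2)) :=
    hψm.comp (measurable_fst.add measurable_snd)
  have hFint : Integrable (fun z : ℝ × ℝ => ψ (z.1 + z.2)) (ν.prod ρ) := by
    rw [← hprod]
    exact (integrable_map_measure hFm.aestronglyMeasurable
      (hXm.prodMk hYm).aemeasurable).mpr hint
  have hEeq : ∫ ω, ψ (X ω + Y ω) ∂μ = ∫ z : ℝ × ℝ, ψ (z.1 + z.2) ∂(ν.prod ρ) := by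
    rw [← hprod]
    exact (integral_map (hXm.prodMk hYm).aemeasurable hFm.aestronglyMeasurable).symm
  have hfub : ∫ z : ℝ × ℝ, ψ (z.1 + z.2) ∂(ν.prod ρ)
      = ∫ y, ∫ x, ψ (x + y) ∂ν ∂ρ :=
    integral_prod_symm _ hFint
  have hinner : ∀ y : ℝ, ∫ x, ψ (x + y) ∂ν = (1 - p) * ψ y + p * ψ (1 + y) := by
    intro y
    have hgm : Measurable fun x : ℝ => ψ (x + y) := hψm.comp (measurable_add_const y)
    rw [hν, integral_map hXm.aemeasurable hgm.aestronglyMeasurable]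
    exact key y
  -- Step 5: integrabilities over ρ
  have hhint : Integrable (fun y => (1 - p) * ψ y + p * ψ (1 + y)) ρ := by
    have := hFint.integral_prod_right
    exact this.congr (Filter.Eventually.of_forall hinner)
  have hsq : Integrable (fun y : ℝ => y ^ 2) ρ := by
    have hYsq : Integrable (fun ω => Y ω ^ 2) μ := hY2.integrable_sq
    rw [hρ]
    exact (integrable_map_measure
      ((measurable_id.pow_const 2).aestronglyMeasurable) hYm.aemeasurable).mpr hYsq
  have hgint : Integrable (fun y : ℝ => y ^ 2 - p) ρ := hsq.sub (integrable_const p)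
  -- Step 6: conclude
  have hle : ∫ y, (1 - p) * ψ y + p * ψ (1 + y) ∂ρ ≤ ∫ y : ℝ, y ^ 2 - p ∂ρ :=
    integral_mono hhint hgint (fun y => hψle y)
  have hleft : ∫ y, (1 - p) * ψ y + p * ψ (1 + y) ∂ρ = 0 := by
    have hcg : ∫ y, ∫ x, ψ (x + y) ∂ν ∂ρ = ∫ y, (1 - p) * ψ y + p * ψ (1 + y) ∂ρ :=
      integral_congr_ae (Filter.Eventually.of_forall hinner)
    rw [← hcg, ← hfub, ← hEeq, hE0]
  have hright : ∫ y : ℝ, y ^ 2 - p ∂ρ = (∫ ω, Y ω ^ 2 ∂μ) - p := by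
    rw [integral_sub hsq (integrable_const p), integral_const]
    simp only [measureReal_def, measure_univ, ENNReal.toReal_one, smul_eq_mul, one_mul]
    congr 1
    rw [hρ]
    exact integral_map hYm.aemeasurable ((measurable_id.pow_const 2).aestronglyMeasurable)
  rw [hleft, hright] at hle
  linarith
end
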